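/- arXiv:1608.03868 — 2 statements merged into one kernel-verified Lean document; each statement's English description precedes it below -/
import Mathlib

section
/- The homomorphism from the free group on two generators to SL(2,ℤ) sending the first generator to the matrix [[1,2],[0,1]] and the second to [[1,0],[2,1]] is injective. -/
open UpperHalfPlane Complex

noncomputable def sanovA : Matrix.SpecialLinearGroup (Fin 2) ℤ :=
  ⟨!![1, 2; 0, 1], by norm_num [Matrix.det_fin_two_of]⟩

noncomputable def sanovB : Matrix.SpecialLinearGroup (Fin 2) ℤ :=
  ⟨!![1, 0; 2, 1], by norm_num [Matrix.det_fin_two_of]⟩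

lemma sanovA_smul (z : ℍ) : ((sanovA • z : ℍ) : ℂ) = (z : ℂ) + 2 := by
  rw [UpperHalfPlane.specialLinearGroup_apply]
  simp [sanovA]

lemma sanovB_smul (z : ℍ) : ((sanovB • z : ℍ) : ℂ) = (z : ℂ) / (2 * z + 1) := by
  rw [UpperHalfPlane.specialLinearGroup_apply]
  simp [sanovB]

lemma denom_ne (z : ℍ) : 2 * (z : ℂ) + 1 ≠ 0 := by
  intro h
  have him : (2 * (z : ℂ) + 1).im = 0 := by rw [h]; simp
  simp [Complex.add_im, Complex.mul_im] at him
  have := z.im_pos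
  linarith

lemma sanovB_circle (z : ℍ) :
    2 * ((sanovB • z : ℍ) : ℂ) - 1 = -(2 * (z : ℂ) + 1)⁻¹ := by
  rw [sanovB_smul]
  field_simp [denom_ne z]
  ring

lemma im_coe_pos (z : ℍ) : 0 < (z : ℂ).im := z.im_pos

lemma habs1 (z : ℍ) (h : norm (2 * (z : ℂ) + 1) ≤ 1) :
    (2 * (z : ℂ).re + 1) ^ 2 + (2 * (z : ℂ).im) ^ 2 ≤ 1 := by
  have h2 : norm (2 * (z : ℂ) + 1) ^ 2 ≤ 1 := by
    nlinarith [norm_nonneg (2 * (z : ℂ) + 1)]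
  rw [Complex.sq_norm, Complex.normSq_apply] at h2
  simp only [Complex.add_re, Complex.add_im, Complex.mul_re, Complex.mul_im] at h2
  norm_num at h2
  simp only [UpperHalfPlane.coe_re, UpperHalfPlane.coe_im]
  nlinarith [h2]

lemma habs2 (z : ℍ) (h : norm (2 * (z : ℂ) - 1) ≤ 1) :
    (2 * (z : ℂ).re - 1) ^ 2 + (2 * (z : ℂ).im) ^ 2 ≤ 1 := by
  have h2 : norm (2 * (z : ℂ) - 1) ^ 2 ≤ 1 := by
    nlinarith [norm_nonneg (2 * (z : ℂ) - 1)]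
  rw [Complex.sq_norm, Complex.normSq_apply] at h2
  simp only [Complex.sub_re, Complex.sub_im, Complex.mul_re, Complex.mul_im] at h2
  norm_num at h2
  simp only [UpperHalfPlane.coe_re, UpperHalfPlane.coe_im]
  nlinarith [h2]

theorem sanov_injective :
    Function.Injective
      (FreeGroup.lift (fun i : Fin 2 => if i = 0 then sanovA else sanovB)) := by
  let X : Fin 2 → Set ℍ := fun i =>
    if i = 0 then {z | 1 ≤ (z : ℂ).re} else {z | norm (2 * (z : ℂ) - 1) ≤ 1}
  let Y : Fin 2 → Set ℍ := fun i =>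
    if i = 0 then {z | (z : ℂ).re ≤ -1} else {z | norm (2 * (z : ℂ) + 1) ≤ 1}
  have X0 : X 0 = {z : ℍ | 1 ≤ (z : ℂ).re} := rfl
  have X1 : X 1 = {z : ℍ | norm (2 * (z : ℂ) - 1) ≤ 1} := rfl
  have Y0 : Y 0 = {z : ℍ | (z : ℂ).re ≤ -1} := rfl
  have Y1 : Y 1 = {z : ℍ | norm (2 * (z : ℂ) + 1) ≤ 1} := rfl
  -- the four basic disjointness facts
  have dX : Disjoint (X 0) (X 1) := by
    rw [X0, X1, Set.disjoint_left]
    intro z h1 h2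
    have := habs2 z h2
    have := im_coe_pos z
    simp only [Set.mem_setOf_eq] at h1
    nlinarith
  have dY : Disjoint (Y 0) (Y 1) := by
    rw [Y0, Y1, Set.disjoint_left]
    intro z h1 h2
    have := habs1 z h2
    have := im_coe_pos z
    simp only [Set.mem_setOf_eq] at h1
    nlinarith
  have dXY00 : Disjoint (X 0) (Y 0) := by
    rw [X0, Y0, Set.disjoint_left]
    intro z h1 h2
    simp only [Set.mem_setOf_eq] at h1 h2
    linarith
  have dXY01 : Disjoint (X 0) (Y 1) := by
    rw [X0, Y1, Set.disjoint_left]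
    intro z h1 h2
    have := habs1 z h2
    have := im_coe_pos z
    simp only [Set.mem_setOf_eq] at h1
    nlinarith
  have dXY10 : Disjoint (X 1) (Y 0) := by
    rw [X1, Y0, Set.disjoint_left]
    intro z h1 h2
    have := habs2 z h1
    have := im_coe_pos z
    simp only [Set.mem_setOf_eq] at h2
    nlinarith
  have dXY11 : Disjoint (X 1) (Y 1) := by
    rw [X1, Y1, Set.disjoint_left]
    intro z h1 h2
    have := habs2 z h1
    have := habs1 z h2
    have := im_coe_pos z
    nlinarith
  apply FreeGroup.injective_lift_of_ping_pong _ X Y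
  · -- hXnonempty
    intro i
    fin_cases i
    · refine ⟨⟨⟨1, 1⟩, by norm_num⟩, ?_⟩
      show (1 : ℝ) ≤ _
      norm_num [UpperHalfPlane.coe_mk]
    · refine ⟨⟨⟨1/2, 1/2⟩, by norm_num⟩, ?_⟩
      show norm (2 * (Complex.mk (1/2) (1/2)) - 1) ≤ 1
      have h : (2 : ℂ) * Complex.mk (1/2) (1/2) - 1 = Complex.I := by
        apply Complex.ext <;> simp [Complex.mul_re, Complex.mul_im]
      rw [h]; simp
  · -- hXdisj
    intro i j hij
    fin_cases i <;> fin_cases j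
    · exact absurd rfl hij
    · exact dX
    · exact dX.symm
    · exact absurd rfl hij
  · -- hYdisj
    intro i j hij
    fin_cases i <;> fin_cases j
    · exact absurd rfl hij
    · exact dY
    · exact dY.symm
    · exact absurd rfl hij
  · -- hXYdisj
    intro i j
    fin_cases i <;> fin_cases j
    · exact dXY00
    · exact dXY01
    · exact dXY10
    · exact dXY11
  · -- hX
    intro i
    fin_cases i
    · intro w hw
      obtain ⟨z, hz, rfl⟩ := hw
      have hz' : ¬ ((z : ℂ).re ≤ -1) := hz
      show (1 : ℝ) ≤ (((if (0 : Fin 2) = 0 then sanovA else sanovB) • z : ℍ) : ℂ).re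
      rw [if_pos rfl, sanovA_smul]
      simp only [Complex.add_re]
      rw [not_le, UpperHalfPlane.coe_re] at hz'
      norm_num
      linarith
    · intro w hw
      obtain ⟨z, hz, rfl⟩ := hw
      have hz' : 1 < norm (2 * (z : ℂ) + 1) := not_le.mp hz
      show norm (2 * (((if (1 : Fin 2) = 0 then sanovA else sanovB) • z : ℍ) : ℂ) - 1) ≤ 1
      rw [if_neg (by decide), sanovB_circle z, norm_neg, norm_inv]
      exact le_of_lt (by rw [inv_lt_one_iff₀]; right; exact hz')
  · -- hY
    intro i
    fin_cases i
    · intro w hw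
      obtain ⟨z, hz, rfl⟩ := hw
      have hz' : (z : ℂ).re < 1 := not_le.mp hz
      show ((((fun i : Fin 2 => if i = 0 then sanovA else sanovB)⁻¹ 0) • z : ℍ) : ℂ).re ≤ -1
      have key : (sanovA • ((sanovA⁻¹ • z) : ℍ) : ℍ) = z := smul_inv_smul _ _
      have h1 : ((sanovA⁻¹ • z : ℍ) : ℂ).re = (z : ℂ).re - 2 := by
        have := sanovA_smul (sanovA⁻¹ • z)
        rw [key] at this
        have : ((sanovA⁻¹ • z : ℍ) : ℂ) = (z : ℂ) - 2 := by
          linear_combination -this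
        rw [this]; simp
      have : ((fun i : Fin 2 => if i = 0 then sanovA else sanovB)⁻¹ 0) = sanovA⁻¹ := by
        simp
      rw [this, h1]
      linarith
    · intro w hw
      obtain ⟨z, hz, rfl⟩ := hw
      have hz' : 1 < norm (2 * (z : ℂ) - 1) := not_le.mp hz
      show norm
        (2 * ((((fun i : Fin 2 => if i = 0 then sanovA else sanovB)⁻¹ 1) • z : ℍ) : ℂ) + 1) ≤ 1
      have heq : ((fun i : Fin 2 => if i = 0 then sanovA else sanovB)⁻¹ 1) = sanovB⁻¹ := by
        simp
      rw [heq]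
      set w := (sanovB⁻¹ • z : ℍ) with hwdef
      have key : (sanovB • w : ℍ) = z := smul_inv_smul _ _
      have hc := sanovB_circle w
      rw [key] at hc
      -- hc : 2 * z - 1 = -(2 * w + 1)⁻¹
      have habs : norm (2 * (z : ℂ) - 1) = (norm (2 * (w : ℂ) + 1))⁻¹ := by
        rw [hc, norm_neg, norm_inv]
      have hne : norm (2 * (w : ℂ) + 1) ≠ 0 := by
        simpa using denom_ne w
      have hpos : 0 < norm (2 * (w : ℂ) + 1) := lt_of_le_of_ne (by positivity) (Ne.symm hne)
      rw [habs] at hz'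
      rw [one_lt_inv_iff₀] at hz'
      exact le_of_lt hz'.2
end

section
/- For any n ≥ 2 and any nontrivial element α of a free group F_n of rank n, there exist a prime p and a normal subgroup N ⊴ F_n with F_n/N ≅ PSL(2,p) and α ∉ N. -/
open Matrix

abbrev SL2Z := Matrix.SpecialLinearGroup (Fin 2) ℤ

@[ext]
structure PPVec : Type where
  x : ℤ
  y : ℤ
  nz : ¬(x = 0 ∧ y = 0)

def smulV (g : SL2Z) (v : PPVec) : PPVec where
  x := g.1 0 0 * v.x + g.1 0 1 * v.y
  y := g.1 1 0 * v.x + g.1 1 1 * v.y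
  nz := by
    rintro ⟨h1, h2⟩
    have hdet : g.1 0 0 * g.1 1 1 - g.1 0 1 * g.1 1 0 = 1 := by
      have h := g.2; rwa [Matrix.det_fin_two] at h
    refine v.nz ⟨?_, ?_⟩
    · linear_combination g.1 1 1 * h1 - g.1 0 1 * h2 - v.x * hdet
    · linear_combination (- g.1 1 0) * h1 + g.1 0 0 * h2 - v.y * hdet

instance : SMul SL2Z PPVec := ⟨smulV⟩

@[simp] lemma smulV_x (g : SL2Z) (v : PPVec) :
    (g • v).x = g.1 0 0 * v.x + g.1 0 1 * v.y := rfl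
@[simp] lemma smulV_y (g : SL2Z) (v : PPVec) :
    (g • v).y = g.1 1 0 * v.x + g.1 1 1 * v.y := rfl

instance : MulAction SL2Z PPVec where
  one_smul v := by
    ext <;> simp
  mul_smul g h v := by
    ext <;>
      simp [Matrix.SpecialLinearGroup.coe_mul, Matrix.mul_apply, Fin.sum_univ_two] <;> ring

lemma pp_forward_pos (K s f D : ℤ) (hK : 1 ≤ K) (hs : 1 ≤ s)
    (hf : 0 < f) (hw : ¬(K * f < |D| ∧ D < 0)) :
    K * f < D + (2*K+1)*f*s := by
  have h1 : f ≤ f * s := le_mul_of_one_le_right hf.le hs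
  have h2 : K * f ≤ K * (f * s) := mul_le_mul_of_nonneg_left h1 (by linarith)
  have h3 : 0 < K * f := mul_pos (by linarith) hf
  rcases le_or_gt 0 D with hD | hD
  · nlinarith
  · have hDa : -D ≤ K * f := by
      have := fun h => hw ⟨h, hD⟩
      rw [abs_of_neg hD] at this
      exact le_of_not_gt this
    nlinarith

lemma pp_backward_pos (K s f D : ℤ) (hK : 1 ≤ K) (hs : 1 ≤ s)
    (hf : 0 < f) (hw : ¬(K * f < |D| ∧ 0 ≤ D)) :
    D - (2*K+1)*f*s < -(K * f) := by
  have h1 : f ≤ f * s := le_mul_of_one_le_right hf.le hs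
  have h2 : K * f ≤ K * (f * s) := mul_le_mul_of_nonneg_left h1 (by linarith)
  have h3 : 0 < K * f := mul_pos (by linarith) hf
  rcases le_or_gt 0 D with hD | hD
  · have hDa : D ≤ K * f := by
      have := fun h => hw ⟨h, hD⟩
      rw [abs_of_nonneg hD] at this
      exact le_of_not_gt this
    nlinarith
  · nlinarith

lemma pp_forward (K c s f D : ℤ) (hK : 1 ≤ K) (hc : c = 2*K + 1) (hs : 1 ≤ s)
    (hv : ¬(f = 0 ∧ D = 0)) (hw : ¬(K * |f| < |D| ∧ D * f < 0)) :
    K * |f| < |D + c*f*s| ∧ 0 ≤ (D + c*f*s) * f := by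
  subst hc
  rcases lt_trichotomy f 0 with hf | hf | hf
  · have h := pp_forward_pos K s (-f) (-D) hK hs (by linarith) (by
      rintro ⟨h1, h2⟩
      refine hw ⟨?_, ?_⟩
      · rwa [abs_of_neg hf, abs_neg] at *
      · nlinarith)
    rw [abs_of_neg hf]
    constructor
    · rw [lt_abs]; right; nlinarith
    · have hA : D + (2*K+1)*f*s < 0 := by
        nlinarith [mul_pos (show (0:ℤ) < K by linarith) (show (0:ℤ) < -f by linarith)]
      exact (mul_pos_of_neg_of_neg hA hf).le
  · subst hf
    simp only [mul_zero, zero_mul, add_zero, abs_zero, le_refl, and_true]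
    have hD : D ≠ 0 := fun h => hv ⟨rfl, h⟩
    simpa using abs_pos.mpr hD
  · have h := pp_forward_pos K s f D hK hs hf (by
      rintro ⟨h1, h2⟩
      refine hw ⟨?_, ?_⟩
      · rwa [abs_of_pos hf]
      · nlinarith)
    rw [abs_of_pos hf]
    constructor
    · rw [lt_abs]; left; nlinarith
    · nlinarith [mul_pos (show (0:ℤ) < K by linarith) hf]

lemma pp_backward (K c s f D : ℤ) (hK : 1 ≤ K) (hc : c = 2*K + 1) (hs : 1 ≤ s)
    (hv : ¬(f = 0 ∧ D = 0)) (hw : ¬(K * |f| < |D| ∧ 0 ≤ D * f)) :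
    K * |f| < |D - c*f*s| ∧ (D - c*f*s) * f < 0 := by
  subst hc
  have hf : f ≠ 0 := by
    rintro rfl
    have hD : D ≠ 0 := fun h => hv ⟨rfl, h⟩
    exact hw ⟨by simpa using abs_pos.mpr hD, by simp⟩
  rcases hf.lt_or_gt with hf | hf
  · have h := pp_backward_pos K s (-f) (-D) hK hs (by linarith) (by
      rintro ⟨h1, h2⟩
      refine hw ⟨?_, ?_⟩
      · rwa [abs_of_neg hf, abs_neg] at *
      · nlinarith)
    rw [abs_of_neg hf]
    constructor
    · rw [lt_abs]; left; nlinarith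
    · nlinarith [mul_pos (show (0:ℤ) < K by linarith) (show (0:ℤ) < -f by linarith)]
  · have h := pp_backward_pos K s f D hK hs hf (by
      rintro ⟨h1, h2⟩
      refine hw ⟨?_, ?_⟩
      · rwa [abs_of_pos hf]
      · nlinarith)
    rw [abs_of_pos hf]
    constructor
    · rw [lt_abs]; right; nlinarith
    · nlinarith [mul_pos (show (0:ℤ) < K by linarith) hf]

-- bound: |p1*x+p2*y| ≤ nn^2 * (|p1*y-p2*x| + |q1*y-q2*x|), given the directions are
-- "independent" and bounded by nn
lemma pp_bound (nn p1 p2 q1 q2 x y : ℤ) (hp : |p1| + |p2| ≤ nn) (hq : |q1| + |q2| ≤ nn)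
    (he : q1*p2 - q2*p1 ≠ 0) :
    |p1*x + p2*y| ≤ nn^2 * (|p1*y - p2*x| + |q1*y - q2*x|) := by
  set e := q1*p2 - q2*p1 with hedef
  set fi := p1*y - p2*x with hfi
  set fj := q1*y - q2*x with hfj
  have key : e * (p1*x + p2*y) = fj*(p1^2+p2^2) - fi*(p1*q1+p2*q2) := by
    simp only [hedef, hfi, hfj]; ring
  have h1 : |p1*x + p2*y| ≤ |e| * |p1*x + p2*y| :=
    le_mul_of_one_le_left (abs_nonneg _) (Int.one_le_abs he)
  have h2 : |e| * |p1*x + p2*y| = |fj*(p1^2+p2^2) - fi*(p1*q1+p2*q2)| := by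
    rw [← abs_mul, key]
  have hpn : 0 ≤ nn := le_trans (by positivity) hp
  have hb1 : p1^2 + p2^2 ≤ nn^2 := by
    nlinarith [sq_abs p1, sq_abs p2, mul_nonneg (abs_nonneg p1) (abs_nonneg p2), mul_self_le_mul_self (by positivity : (0:ℤ) ≤ |p1| + |p2|) hp]
  have hb2 : |p1*q1 + p2*q2| ≤ nn^2 := by
    calc |p1*q1 + p2*q2| ≤ |p1*q1| + |p2*q2| := abs_add_le _ _
    _ = |p1| * |q1| + |p2| * |q2| := by rw [abs_mul, abs_mul]
    _ ≤ nn^2 := by nlinarith [abs_nonneg p1, abs_nonneg p2, abs_nonneg q1, abs_nonneg q2, mul_nonneg (abs_nonneg p1) (abs_nonneg q2), mul_nonneg (abs_nonneg p2) (abs_nonneg q1), mul_le_mul hp hq (by positivity) (le_trans (by positivity) hp)]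
  have h3 : |fj*(p1^2+p2^2) - fi*(p1*q1+p2*q2)| ≤ |fj| * (p1^2+p2^2) + |fi| * |p1*q1+p2*q2| := by
    calc |fj*(p1^2+p2^2) - fi*(p1*q1+p2*q2)|
        ≤ |fj*(p1^2+p2^2)| + |fi*(p1*q1+p2*q2)| := abs_sub _ _
    _ = |fj| * (p1^2+p2^2) + |fi| * |p1*q1+p2*q2| := by
        rw [abs_mul, abs_mul, abs_of_nonneg (by positivity : (0:ℤ) ≤ p1^2+p2^2)]
  have h4 : |fj| * (p1^2+p2^2) + |fi| * |p1*q1+p2*q2| ≤ nn^2 * (|fi| + |fj|) := by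
    nlinarith [abs_nonneg fi, abs_nonneg fj]
  linarith

lemma pp_disj (nn K p1 p2 q1 q2 x y : ℤ) (hKdef : K = 2*nn^2)
    (hp : |p1| + |p2| ≤ nn) (hq : |q1| + |q2| ≤ nn) (he : q1*p2 - q2*p1 ≠ 0)
    (hi : K * |p1*y - p2*x| < |p1*x + p2*y|) (hj : K * |q1*y - q2*x| < |q1*x + q2*y|) :
    False := by
  have b1 := pp_bound nn p1 p2 q1 q2 x y hp hq he
  have b2 := pp_bound nn q1 q2 p1 p2 x y hq hp (by
    intro h; apply he; linarith [h])
  subst hKdef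
  linarith

noncomputable section

def KK (n : ℕ) : ℤ := 2 * (n:ℤ)^2
def cc (n : ℕ) : ℤ := 4 * (n:ℤ)^2 + 1

def dd1 (n : ℕ) (i : Fin n) : ℤ := if (i : ℕ) = 0 then 1 else ((i : ℕ) : ℤ) - 1
def dd2 (n : ℕ) (i : Fin n) : ℤ := if (i : ℕ) = 0 then 0 else 1

lemma cc_eq (n : ℕ) : cc n = 2 * KK n + 1 := by simp [cc, KK]; ring

lemma dd_sq_one_le (n : ℕ) (i : Fin n) : 1 ≤ dd1 n i ^ 2 + dd2 n i ^ 2 := by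
  by_cases h : (i : ℕ) = 0 <;> simp [dd1, dd2, h] <;> positivity

lemma dd_abs_le (n : ℕ) (i : Fin n) : |dd1 n i| + |dd2 n i| ≤ (n : ℤ) := by
  have hi := i.isLt
  by_cases h : (i : ℕ) = 0
  · simp [dd1, dd2, h]
    omega
  · simp only [dd1, dd2, h, if_false]
    rw [abs_of_nonneg (by omega : (0:ℤ) ≤ ((i:ℕ):ℤ) - 1), abs_one]
    omega

lemma dd_det_ne (n : ℕ) (i j : Fin n) (hij : i ≠ j) :
    dd1 n j * dd2 n i - dd2 n j * dd1 n i ≠ 0 := by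
  have hvij : (i : ℕ) ≠ (j : ℕ) := fun h => hij (Fin.ext h)
  by_cases hi : (i : ℕ) = 0 <;> by_cases hj : (j : ℕ) = 0 <;>
    simp only [dd1, dd2, hi, hj, if_true, if_false] <;> [skip; skip; skip; skip]
  · omega
  · norm_num
  · norm_num
  · intro h
    have : ((i:ℕ):ℤ) = ((j:ℕ):ℤ) := by linarith
    exact hvij (by exact_mod_cast this)

def gen (n : ℕ) (i : Fin n) : SL2Z :=
  ⟨!![1 - cc n * dd1 n i * dd2 n i, cc n * dd1 n i ^ 2;
      -(cc n * dd2 n i ^ 2), 1 + cc n * dd1 n i * dd2 n i], by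
    rw [Matrix.det_fin_two_of]; ring⟩

def genInv (n : ℕ) (i : Fin n) : SL2Z :=
  ⟨!![1 + cc n * dd1 n i * dd2 n i, -(cc n * dd1 n i ^ 2);
      cc n * dd2 n i ^ 2, 1 - cc n * dd1 n i * dd2 n i], by
    rw [Matrix.det_fin_two_of]; ring⟩

lemma gen_inv_eq (n : ℕ) (i : Fin n) : (gen n i)⁻¹ = genInv n i := by
  apply inv_eq_of_mul_eq_one_right
  apply Subtype.ext
  rw [Matrix.SpecialLinearGroup.coe_mul]
  ext r s
  fin_cases r <;> fin_cases s <;>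
    simp [gen, genInv, Matrix.mul_apply, Fin.sum_univ_two] <;> ring

def Ff (n : ℕ) (i : Fin n) (v : PPVec) : ℤ := dd1 n i * v.y - dd2 n i * v.x
def Dd (n : ℕ) (i : Fin n) (v : PPVec) : ℤ := dd1 n i * v.x + dd2 n i * v.y

lemma Ff_smul (n : ℕ) (i : Fin n) (v : PPVec) : Ff n i (gen n i • v) = Ff n i v := by
  rw [Ff, Ff, smulV_x, smulV_y]; simp [gen]; ring

lemma Dd_smul (n : ℕ) (i : Fin n) (v : PPVec) :
    Dd n i (gen n i • v) = Dd n i v + cc n * Ff n i v * (dd1 n i ^ 2 + dd2 n i ^ 2) := by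
  rw [Dd, Dd, Ff, smulV_x, smulV_y]; simp [gen]; ring

lemma Ff_smul_inv (n : ℕ) (i : Fin n) (v : PPVec) : Ff n i ((gen n i)⁻¹ • v) = Ff n i v := by
  rw [gen_inv_eq, Ff, Ff, smulV_x, smulV_y]; simp [genInv]; ring

lemma Dd_smul_inv (n : ℕ) (i : Fin n) (v : PPVec) :
    Dd n i ((gen n i)⁻¹ • v) = Dd n i v - cc n * Ff n i v * (dd1 n i ^ 2 + dd2 n i ^ 2) := by
  rw [gen_inv_eq, Dd, Dd, Ff, smulV_x, smulV_y]; simp [genInv]; ring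

lemma Ff_Dd_ne (n : ℕ) (i : Fin n) (v : PPVec) : ¬(Ff n i v = 0 ∧ Dd n i v = 0) := by
  rintro ⟨h1, h2⟩
  apply v.nz
  have hs := dd_sq_one_le n i
  have hx : (dd1 n i ^ 2 + dd2 n i ^ 2) * v.x = dd1 n i * Dd n i v - dd2 n i * Ff n i v := by
    simp [Dd, Ff]; ring
  have hy : (dd1 n i ^ 2 + dd2 n i ^ 2) * v.y = dd2 n i * Dd n i v + dd1 n i * Ff n i v := by
    simp [Dd, Ff]; ring
  rw [h1, h2] at hx hy
  simp only [mul_zero, sub_zero, zero_sub, add_zero, zero_add, neg_zero] at hx hy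
  have hsne : dd1 n i ^ 2 + dd2 n i ^ 2 ≠ 0 := by linarith
  exact ⟨(mul_eq_zero.mp hx).resolve_left hsne, (mul_eq_zero.mp hy).resolve_left hsne⟩

def Xset (n : ℕ) (i : Fin n) : Set PPVec :=
  {v | KK n * |Ff n i v| < |Dd n i v| ∧ 0 ≤ Dd n i v * Ff n i v}

def Yset (n : ℕ) (i : Fin n) : Set PPVec :=
  {v | KK n * |Ff n i v| < |Dd n i v| ∧ Dd n i v * Ff n i v < 0}

theorem gen_lift_injective (n : ℕ) (hn : 2 ≤ n) :
    Function.Injective (FreeGroup.lift (gen n)) := by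
  haveI : Nontrivial (Fin n) :=
    ⟨⟨0, by omega⟩, ⟨1, by omega⟩, by intro h; simpa using congrArg Fin.val h⟩
  have hK1 : 1 ≤ KK n := by
    have : (2:ℤ) ≤ (n:ℤ) := by exact_mod_cast hn
    simp only [KK]
    nlinarith [this]
  apply FreeGroup.injective_lift_of_ping_pong (gen n) (Xset n) (Yset n)
  · -- nonempty
    intro i
    have hnz : ¬(dd1 n i = 0 ∧ dd2 n i = 0) := by
      rintro ⟨h1, h2⟩
      by_cases h : (i : ℕ) = 0 <;> simp [dd1, dd2, h] at h1 h2
    have h0 : Ff n i ⟨dd1 n i, dd2 n i, hnz⟩ = 0 := by simp [Ff]; ring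
    have h1 : Dd n i ⟨dd1 n i, dd2 n i, hnz⟩ = dd1 n i ^ 2 + dd2 n i ^ 2 := by
      simp [Dd]; ring
    refine ⟨⟨dd1 n i, dd2 n i, hnz⟩, ?_, ?_⟩
    · rw [h0, h1]
      simp only [abs_zero, mul_zero]
      rw [abs_of_pos (by linarith [dd_sq_one_le n i])]
      linarith [dd_sq_one_le n i]
    · rw [h0]
      simp
  · -- X pairwise disjoint
    intro i j hij
    try simp only [Function.onFun]
    rw [Set.disjoint_left]
    rintro v ⟨hvi, _⟩ ⟨hvj, _⟩
    exact pp_disj n (KK n) (dd1 n i) (dd2 n i) (dd1 n j) (dd2 n j) v.x v.y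
      (by simp [KK]) (dd_abs_le n i) (dd_abs_le n j) (dd_det_ne n i j hij) hvi hvj
  · -- Y pairwise disjoint
    intro i j hij
    try simp only [Function.onFun]
    rw [Set.disjoint_left]
    rintro v ⟨hvi, _⟩ ⟨hvj, _⟩
    exact pp_disj n (KK n) (dd1 n i) (dd2 n i) (dd1 n j) (dd2 n j) v.x v.y
      (by simp [KK]) (dd_abs_le n i) (dd_abs_le n j) (dd_det_ne n i j hij) hvi hvj
  · -- X i disjoint Y j
    intro i j
    try simp only [Function.onFun]
    rw [Set.disjoint_left]
    rintro v ⟨hvi, hsi⟩ ⟨hvj, hsj⟩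
    rcases eq_or_ne i j with rfl | hij
    · linarith
    · exact pp_disj n (KK n) (dd1 n i) (dd2 n i) (dd1 n j) (dd2 n j) v.x v.y
        (by simp [KK]) (dd_abs_le n i) (dd_abs_le n j) (dd_det_ne n i j hij) hvi hvj
  · -- hX
    intro i
    rintro _ ⟨v, hv, rfl⟩
    have hw : ¬(KK n * |Ff n i v| < |Dd n i v| ∧ Dd n i v * Ff n i v < 0) := hv
    obtain ⟨hA, hB⟩ := pp_forward (KK n) (cc n) (dd1 n i ^ 2 + dd2 n i ^ 2)
      (Ff n i v) (Dd n i v) hK1 (cc_eq n) (dd_sq_one_le n i) (Ff_Dd_ne n i v) hw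
    refine ⟨?_, ?_⟩
    · rw [Ff_smul, Dd_smul]; exact hA
    · rw [Ff_smul, Dd_smul]; exact hB
  · -- hY
    intro i
    rintro _ ⟨v, hv, rfl⟩
    simp only [Pi.inv_apply]
    have hw : ¬(KK n * |Ff n i v| < |Dd n i v| ∧ 0 ≤ Dd n i v * Ff n i v) := hv
    obtain ⟨hA, hB⟩ := pp_backward (KK n) (cc n) (dd1 n i ^ 2 + dd2 n i ^ 2)
      (Ff n i v) (Dd n i v) hK1 (cc_eq n) (dd_sq_one_le n i) (Ff_Dd_ne n i v) hw
    refine ⟨?_, ?_⟩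
    · rw [Ff_smul_inv, Dd_smul_inv]; exact hA
    · rw [Ff_smul_inv, Dd_smul_inv]; exact hB

end

open Matrix MatrixGroups

variable {p : ℕ}

def Umat (t : ZMod p) : SL(2, ZMod p) :=
  ⟨!![1, t; 0, 1], by simp [Matrix.det_fin_two_of]⟩

def Lmat (t : ZMod p) : SL(2, ZMod p) :=
  ⟨!![1, 0; t, 1], by simp [Matrix.det_fin_two_of]⟩

lemma Umat_mul (s t : ZMod p) : Umat s * Umat t = Umat (s + t) := by
  apply Subtype.ext
  rw [Matrix.SpecialLinearGroup.coe_mul]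
  ext i j
  fin_cases i <;> fin_cases j <;>
    simp [Umat, Matrix.mul_apply, Fin.sum_univ_two] <;> ring

lemma Lmat_mul (s t : ZMod p) : Lmat s * Lmat t = Lmat (s + t) := by
  apply Subtype.ext
  rw [Matrix.SpecialLinearGroup.coe_mul]
  ext i j
  fin_cases i <;> fin_cases j <;>
    simp [Lmat, Matrix.mul_apply, Fin.sum_univ_two] <;> ring

lemma Umat_zero : (Umat 0 : SL(2, ZMod p)) = 1 := by
  apply Subtype.ext
  ext i j
  fin_cases i <;> fin_cases j <;> simp [Umat]

lemma Lmat_zero : (Lmat 0 : SL(2, ZMod p)) = 1 := by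
  apply Subtype.ext
  ext i j
  fin_cases i <;> fin_cases j <;> simp [Lmat]

lemma Umat_pow (t : ZMod p) (k : ℕ) : Umat t ^ k = Umat ((k : ZMod p) * t) := by
  induction k with
  | zero => simp [Umat_zero]
  | succ m ih => rw [pow_succ, ih, Umat_mul]; congr 1; push_cast; ring

lemma Lmat_pow (t : ZMod p) (k : ℕ) : Lmat t ^ k = Lmat ((k : ZMod p) * t) := by
  induction k with
  | zero => simp [Lmat_zero]
  | succ m ih => rw [pow_succ, ih, Lmat_mul]; congr 1; push_cast; ring

lemma SL2_gen [Fact p.Prime] (u l : ZMod p) (hu : u ≠ 0) (hl : l ≠ 0) (g : SL(2, ZMod p)) :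
    g ∈ Subgroup.closure ({Umat u, Lmat l} : Set (SL(2, ZMod p))) := by
  set H := Subgroup.closure ({Umat u, Lmat l} : Set (SL(2, ZMod p))) with hH
  have hUm : Umat u ∈ H := Subgroup.subset_closure (Set.mem_insert _ _)
  have hLm : Lmat l ∈ H := Subgroup.subset_closure (Set.mem_insert_of_mem _ rfl)
  have hU : ∀ t : ZMod p, Umat t ∈ H := by
    intro t
    have : Umat t = Umat u ^ (t * u⁻¹).val := by
      rw [Umat_pow]
      congr 1
      have hval : (((t * u⁻¹).val : ℕ) : ZMod p) = t * u⁻¹ := ZMod.natCast_rightInverse _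
      rw [hval]
      field_simp
    rw [this]; exact pow_mem hUm _
  have hL : ∀ t : ZMod p, Lmat t ∈ H := by
    intro t
    have : Lmat t = Lmat l ^ (t * l⁻¹).val := by
      rw [Lmat_pow]
      congr 1
      have hval : (((t * l⁻¹).val : ℕ) : ZMod p) = t * l⁻¹ := ZMod.natCast_rightInverse _
      rw [hval]
      field_simp
    rw [this]; exact pow_mem hLm _
  have key : ∀ g : SL(2, ZMod p), g.1 1 0 ≠ 0 → g ∈ H := by
    intro g
    induction g using Matrix.SpecialLinearGroup.fin_two_induction with
    | _ a b c d hdet =>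
    intro hc
    simp only [Matrix.cons_val', Matrix.cons_val_zero, Matrix.cons_val_one, Matrix.head_cons,
      Matrix.head_fin_const, Matrix.empty_val', Matrix.cons_val_fin_one] at hc
    have hc' : c ≠ 0 := hc
    have heq : (⟨!![a, b; c, d], by rwa [Matrix.det_fin_two_of]⟩ : SL(2, ZMod p)) =
        Umat ((a-1)/c) * Lmat c * Umat ((d-1)/c) := by
      apply Subtype.ext
      show (!![a, b; c, d] : Matrix (Fin 2) (Fin 2) (ZMod p)) =
        ((Umat ((a-1)/c) * Lmat c * Umat ((d-1)/c) : SL(2, ZMod p)) : Matrix (Fin 2) (Fin 2) (ZMod p))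
      rw [Matrix.SpecialLinearGroup.coe_mul, Matrix.SpecialLinearGroup.coe_mul]
      ext i j
      fin_cases i <;> fin_cases j <;>
        simp [Umat, Lmat, Matrix.mul_apply, Fin.sum_univ_two]
      all_goals try field_simp
      · ring
      · linear_combination (-1 : ZMod p) * hdet
      · ring
    rw [heq]
    exact mul_mem (mul_mem (hU _) (hL c)) (hU _)
  rcases eq_or_ne (g.1 1 0) 0 with h0 | h0
  · have hdet : g.1 0 0 * g.1 1 1 - g.1 0 1 * g.1 1 0 = 1 := by
      have := g.2; rwa [Matrix.det_fin_two] at this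
    have h11 : g.1 1 1 ≠ 0 := by
      intro h
      rw [h0, h] at hdet; simp at hdet
    have hmul10 : (g * Lmat 1).1 1 0 ≠ 0 := by
      rw [Matrix.SpecialLinearGroup.coe_mul, Matrix.mul_apply, Fin.sum_univ_two]
      simp [Lmat, h0, h11]
    have hmem := key (g * Lmat 1) hmul10
    have : g = (g * Lmat 1) * Lmat (-1) := by
      rw [mul_assoc, Lmat_mul]
      simp [Lmat_zero]
    rw [this]
    exact mul_mem hmem (hL _)
  · exact key g h0

lemma redp_entry (p : ℕ) (g : SL2Z) (i j : Fin 2) :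
    ((Matrix.SpecialLinearGroup.map (Int.castRingHom (ZMod p)) g) :
      Matrix (Fin 2) (Fin 2) (ZMod p)) i j = ((g : Matrix (Fin 2) (Fin 2) ℤ) i j : ZMod p) := by
  simp

lemma redp_gen_zero (n p : ℕ) (h0 : 0 < n) :
    Matrix.SpecialLinearGroup.map (Int.castRingHom (ZMod p)) (gen n ⟨0, h0⟩) =
      Umat ((cc n : ℤ) : ZMod p) := by
  apply Subtype.ext
  ext r s
  fin_cases r <;> fin_cases s <;>
    · rw [Matrix.SpecialLinearGroup.map_apply_coe, RingHom.mapMatrix_apply]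
      simp [gen, Umat, dd1, dd2]
      try push_cast
      try ring

lemma redp_gen_one (n p : ℕ) (h1 : 1 < n) :
    Matrix.SpecialLinearGroup.map (Int.castRingHom (ZMod p)) (gen n ⟨1, h1⟩) =
      Lmat (-((cc n : ℤ) : ZMod p)) := by
  apply Subtype.ext
  ext r s
  fin_cases r <;> fin_cases s <;>
    · rw [Matrix.SpecialLinearGroup.map_apply_coe, RingHom.mapMatrix_apply]
      simp [gen, Lmat, dd1, dd2]
      try push_cast
      try ring

set_option maxHeartbeats 1000000 in
theorem free_group_residually_PSL2p
    (n : ℕ) (hn : 2 ≤ n) (α : FreeGroup (Fin n)) (hα : α ≠ 1) :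
    ∃ (p : ℕ), p.Prime ∧
      ∃ f : FreeGroup (Fin n) →*
          (Matrix.SpecialLinearGroup (Fin 2) (ZMod p) ⧸
            Subgroup.center (Matrix.SpecialLinearGroup (Fin 2) (ZMod p))),
        Function.Surjective f ∧ α ∉ f.ker := by
  classical
  have hn2 : (2:ℤ) ≤ (n:ℤ) := by exact_mod_cast hn
  set φ := FreeGroup.lift (gen n) with hφ
  have hinj := gen_lift_injective n hn
  set M := φ α with hMdef
  have hM1 : M ≠ 1 := fun h => hα (hinj (h.trans (map_one φ).symm))
  set cnat : ℕ := 4 * n^2 + 1 with hcnat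
  have hccnat : cc n = (cnat : ℤ) := by rw [hcnat, cc]; push_cast; ring
  have hcnat17 : 17 ≤ cnat := by rw [hcnat]; nlinarith [hn]
  have hgen1 : ∀ i, Matrix.SpecialLinearGroup.map (Int.castRingHom (ZMod cnat)) (gen n i) = 1 := by
    intro i
    apply Subtype.ext
    ext r s
    fin_cases r <;> fin_cases s <;>
      · rw [Matrix.SpecialLinearGroup.map_apply_coe, RingHom.mapMatrix_apply]
        simp [gen, hccnat]
        try push_cast [ZMod.natCast_self]
        try ring
  have hredcM : Matrix.SpecialLinearGroup.map (Int.castRingHom (ZMod cnat)) M = 1 := by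
    have hcomp : (Matrix.SpecialLinearGroup.map (n := Fin 2)
        (Int.castRingHom (ZMod cnat))).comp φ = 1 := by
      apply FreeGroup.ext_hom
      intro i
      simp only [MonoidHom.comp_apply, MonoidHom.one_apply, hφ, FreeGroup.lift_apply_of]
      exact hgen1 i
    have := DFunLike.congr_fun hcomp α
    simpa using this
  have hMneg : (M : Matrix (Fin 2) (Fin 2) ℤ) ≠ -1 := by
    intro h
    have h00 : (((M : Matrix (Fin 2) (Fin 2) ℤ) 0 0 : ℤ) : ZMod cnat) = 1 := by
      have := congrArg (fun g : Matrix.SpecialLinearGroup (Fin 2) (ZMod cnat) =>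
        (g : Matrix (Fin 2) (Fin 2) (ZMod cnat)) 0 0) hredcM
      rw [redp_entry] at this
      simpa using this
    rw [h] at h00
    simp at h00
    have h2 : ((2 : ℤ) : ZMod cnat) = 0 := by
      push_cast
      linear_combination (-1 : ZMod cnat) * h00
    rw [ZMod.intCast_zmod_eq_zero_iff_dvd] at h2
    have hle : (cnat : ℤ) ≤ 2 := Int.le_of_dvd (by norm_num) h2
    have h17 : (17 : ℤ) ≤ (cnat : ℤ) := by exact_mod_cast hcnat17
    linarith
  have hM1m : (M : Matrix (Fin 2) (Fin 2) ℤ) ≠ 1 := fun h => hM1 (Subtype.ext h)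
  obtain ⟨i1, j1, he1⟩ : ∃ i j, (M : Matrix (Fin 2) (Fin 2) ℤ) i j ≠
      (1 : Matrix (Fin 2) (Fin 2) ℤ) i j := by
    by_contra h
    push_neg at h
    exact hM1m (by ext i j; exact h i j)
  obtain ⟨i2, j2, he2⟩ : ∃ i j, (M : Matrix (Fin 2) (Fin 2) ℤ) i j ≠
      (-1 : Matrix (Fin 2) (Fin 2) ℤ) i j := by
    by_contra h
    push_neg at h
    exact hMneg (by ext i j; exact h i j)
  set e1 : ℤ := (M : Matrix (Fin 2) (Fin 2) ℤ) i1 j1 - (1 : Matrix (Fin 2) (Fin 2) ℤ) i1 j1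
    with he1def
  set e2 : ℤ := (M : Matrix (Fin 2) (Fin 2) ℤ) i2 j2 - (-1 : Matrix (Fin 2) (Fin 2) ℤ) i2 j2
    with he2def
  have he1' : e1 ≠ 0 := sub_ne_zero.mpr he1
  have he2' : e2 ≠ 0 := sub_ne_zero.mpr he2
  set N : ℕ := max (max e1.natAbs e2.natAbs) cnat with hNdef
  obtain ⟨p, hpN, hpp⟩ := Nat.exists_infinite_primes (N + 1)
  haveI : Fact p.Prime := ⟨hpp⟩
  have hcpne : ((cc n : ℤ) : ZMod p) ≠ 0 := by
    rw [Ne, ZMod.intCast_zmod_eq_zero_iff_dvd]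
    intro hdvd
    have hpos : (0:ℤ) < cc n := by rw [hccnat]; positivity
    have hle : (p:ℤ) ≤ cc n := Int.le_of_dvd hpos hdvd
    rw [hccnat] at hle
    have h1 : cnat ≤ N := le_max_right _ _
    have h2 : p ≤ cnat := by exact_mod_cast hle
    omega
  refine ⟨p, hpp,
    (QuotientGroup.mk' (Subgroup.center (Matrix.SpecialLinearGroup (Fin 2) (ZMod p)))).comp
      ((Matrix.SpecialLinearGroup.map (Int.castRingHom (ZMod p))).comp φ), ?_, ?_⟩
  · -- surjectivity
    have hsurj2 : Function.Surjective
        ((Matrix.SpecialLinearGroup.map (Int.castRingHom (ZMod p))).comp φ) := by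
      rw [← MonoidHom.range_eq_top, eq_top_iff]
      intro g _
      have hsub : ({Umat ((cc n : ℤ) : ZMod p), Lmat (-((cc n : ℤ) : ZMod p))} :
          Set (Matrix.SpecialLinearGroup (Fin 2) (ZMod p))) ⊆
          ((Matrix.SpecialLinearGroup.map (Int.castRingHom (ZMod p))).comp φ).range := by
        intro z hz
        rcases hz with rfl | rfl
        · refine ⟨FreeGroup.of ⟨0, by omega⟩, ?_⟩
          simp only [MonoidHom.comp_apply, hφ, FreeGroup.lift_apply_of]
          exact redp_gen_zero n p (by omega)
        · refine ⟨FreeGroup.of ⟨1, by omega⟩, ?_⟩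
          simp only [MonoidHom.comp_apply, hφ, FreeGroup.lift_apply_of]
          exact redp_gen_one n p (by omega)
      exact (Subgroup.closure_le _).mpr hsub
        (SL2_gen _ _ hcpne (neg_ne_zero.mpr hcpne) g)
    exact (QuotientGroup.mk'_surjective _).comp hsurj2
  · -- α survives
    intro hker
    rw [MonoidHom.mem_ker] at hker
    have hcen : Matrix.SpecialLinearGroup.map (Int.castRingHom (ZMod p)) M ∈
        Subgroup.center (Matrix.SpecialLinearGroup (Fin 2) (ZMod p)) := by
      rw [MonoidHom.comp_apply, MonoidHom.comp_apply] at hker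
      rw [← hMdef] at hker
      rwa [QuotientGroup.mk'_apply, QuotientGroup.eq_one_iff] at hker
    rw [Matrix.SpecialLinearGroup.mem_center_iff] at hcen
    obtain ⟨r, hr, hrs⟩ := hcen
    rw [Fintype.card_fin, pow_two] at hr
    have hdvd : ∀ (i j : Fin 2) (A : Matrix (Fin 2) (Fin 2) ℤ),
        ((Matrix.SpecialLinearGroup.map (Int.castRingHom (ZMod p)) M) :
          Matrix (Fin 2) (Fin 2) (ZMod p)) i j = ((A i j : ℤ) : ZMod p) →
        (M : Matrix (Fin 2) (Fin 2) ℤ) i j - A i j ≠ 0 →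
        ((M : Matrix (Fin 2) (Fin 2) ℤ) i j - A i j).natAbs < p → False := by
      intro i j A hAeq hne hlt
      have hcast : (((M : Matrix (Fin 2) (Fin 2) ℤ) i j - A i j : ℤ) : ZMod p) = 0 := by
        rw [Int.cast_sub, sub_eq_zero, ← hAeq, redp_entry]
      rw [ZMod.intCast_zmod_eq_zero_iff_dvd] at hcast
      have hdn : p ∣ ((M : Matrix (Fin 2) (Fin 2) ℤ) i j - A i j).natAbs := by
        have := Int.natAbs_dvd_natAbs.mpr hcast
        simpa using this
      have := Nat.le_of_dvd (Int.natAbs_pos.mpr hne) hdn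
      omega
    rcases mul_self_eq_one_iff.mp hr with rfl | rfl
    · have hmat : ((Matrix.SpecialLinearGroup.map (Int.castRingHom (ZMod p)) M) :
          Matrix (Fin 2) (Fin 2) (ZMod p)) = 1 := by
        rw [← hrs]; simp
      refine hdvd i1 j1 1 ?_ he1' ?_
      · rw [hmat]
        by_cases h : i1 = j1 <;> simp [Matrix.one_apply, h]
      · have h1 : e1.natAbs ≤ N := le_trans (le_max_left _ _) (le_max_left _ _)
        rw [← he1def]
        omega
    · have hmat : ((Matrix.SpecialLinearGroup.map (Int.castRingHom (ZMod p)) M) :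
          Matrix (Fin 2) (Fin 2) (ZMod p)) = -1 := by
        rw [← hrs]
        ext r s
        by_cases h : r = s <;>
          simp [Matrix.scalar_apply, Matrix.one_apply, Matrix.diagonal, h]
      refine hdvd i2 j2 (-1) ?_ he2' ?_
      · rw [hmat]
        by_cases h : i2 = j2 <;> simp [Matrix.one_apply, h]
      · have h1 : e2.natAbs ≤ N := le_trans (le_max_right _ _) (le_max_left _ _)
        rw [← he2def]
        omega
end
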